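/- Fix constants B > 0, D > 0 and u₂ > 1. Define f : (0,∞) → ℝ by f(t) = t + (2^{D/(B t)} − 1)·t/u₂. Suppose x ≥ 0 satisfies x·e^x = (u₂ − 1)/e, and set t* = (ln 2)·D / (B·(x + 1)). Then t* is a global minimizer of f on (0,∞), i.e., for every t > 0, f(t*) ≤ f(t). -/

import Mathlib

theorem stmt_0 (B D u₂ x : ℝ) (hB : 0 < B) (hD : 0 < D) (hu : 1 < u₂)
    (hx : 0 ≤ x) (hxe : x * Real.exp x = (u₂ - 1) / Real.exp 1) :
    ∀ t > 0,
      (Real.log 2 * D / (B * (x + 1)))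
          + ((2 : ℝ) ^ (D / (B * (Real.log 2 * D / (B * (x + 1))))) - 1)
            * (Real.log 2 * D / (B * (x + 1))) / u₂
        ≤ t + ((2 : ℝ) ^ (D / (B * t)) - 1) * t / u₂ := by
  intro t ht
  have hlog2 : 0 < Real.log 2 := Real.log_pos one_lt_two
  have ha : (0:ℝ) < x + 1 := by linarith
  have hu0 : (0:ℝ) < u₂ := by linarith
  have h1 : (2:ℝ) ^ (D / (B * (Real.log 2 * D / (B * (x + 1))))) = Real.exp (x + 1) := by
    rw [Real.rpow_def_of_pos (by norm_num : (0:ℝ) < 2)]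
    congr 1
    field_simp
  have h2 : (2:ℝ) ^ (D / (B * t)) = Real.exp (Real.log 2 * D / (B * t)) := by
    rw [Real.rpow_def_of_pos (by norm_num : (0:ℝ) < 2)]
    congr 1
    field_simp
  rw [h1, h2]
  set s := Real.log 2 * D / (B * t) with hs
  have hs0 : 0 < s := by positivity
  have hst : s * (B * t) = Real.log 2 * D := by
    rw [hs]; field_simp
  have hu2 : u₂ - 1 = x * Real.exp (x + 1) := by
    have he : (0:ℝ) < Real.exp 1 := Real.exp_pos 1
    have : x * Real.exp x * Real.exp 1 = u₂ - 1 := by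
      rw [hxe]; field_simp
    rw [← this, Real.exp_add]; ring
  have key : Real.exp (x + 1) * (s - x) ≤ Real.exp s := by
    have h := Real.add_one_le_exp (s - (x + 1))
    have heq : Real.exp (s - (x + 1)) * Real.exp (x + 1) = Real.exp s := by
      rw [← Real.exp_add]; ring_nf
    nlinarith [Real.exp_pos (x + 1)]
  have hL : Real.log 2 * D / (B * (x + 1))
      + (Real.exp (x + 1) - 1) * (Real.log 2 * D / (B * (x + 1))) / u₂
      = Real.log 2 * D * Real.exp (x + 1) / (B * u₂) := by
    rw [eq_div_iff (by positivity : B * u₂ ≠ 0)]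
    field_simp
    linear_combination hu2
  rw [hL, div_le_iff₀ (by positivity : (0:ℝ) < B * u₂)]
  have hkey' : Real.exp (x + 1) * (s - x) * (B * t) ≤ Real.exp s * (B * t) :=
    mul_le_mul_of_nonneg_right key (by positivity)
  have hexp : Real.log 2 * D * Real.exp (x + 1) = s * (B * t) * Real.exp (x + 1) := by
    rw [hst]
  rw [hexp]
  have hrhs : (t + (Real.exp s - 1) * t / u₂) * (B * u₂)
      = B * u₂ * t + (Real.exp s - 1) * t * B := by
    field_simp
  rw [hrhs]
  nlinarith [hkey', mul_pos hB ht, hu2]
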